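/- The identity Σ_{k=0}^∞ (k + 2μθ_k)^2 y^k/γ_μ(k) = y^2 e_μ(y) + y(e_μ(y) + 2μ e_μ(-y)) holds for all y ≥ 0 and μ ≥ 0. -/

import Mathlib

noncomputable section

/-- θ_k = 0 if k even, 1 if k odd. -/
def theta (k : ℕ) : ℝ := if Even k then 0 else 1

/-- Dunkl coefficients γ_μ(n). -/
def gammaD (mu : ℝ) (n : ℕ) : ℝ :=
  if Even n then
    2 ^ n * (Nat.factorial (n / 2)) * Real.Gamma ((n / 2 : ℕ) + mu + 1 / 2) / Real.Gamma (mu + 1 / 2)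
  else
    2 ^ n * (Nat.factorial (n / 2)) * Real.Gamma ((n / 2 : ℕ) + mu + 3 / 2) / Real.Gamma (mu + 1 / 2)

/-- Dunkl exponential e_μ(x) = Σ xⁿ/γ_μ(n). -/
def eD (mu x : ℝ) : ℝ := ∑' n : ℕ, x ^ n / gammaD mu n

/-- r_n(x) = x - 1/(2n). -/
def rn (n : ℕ) (x : ℝ) : ℝ := x - 1 / (2 * n)

/-- Modified Dunkl Szász–Mirakjan–Kantorovich operator K_n. -/
def Kn (mu : ℝ) (n : ℕ) (f : ℝ → ℝ) (x : ℝ) : ℝ :=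
  (n / eD mu (n * rn n x)) * ∑' k : ℕ, (n * rn n x) ^ k / gammaD mu k *
    ∫ t in (((k : ℝ) + 2 * mu * theta k) / n)..(((k : ℝ) + 1 + 2 * mu * theta k) / n), f t

/-- Stancu-type modified Dunkl Szász–Kantorovich operator K_n^*. -/
def KnStar (mu a b : ℝ) (n : ℕ) (f : ℝ → ℝ) (x : ℝ) : ℝ :=
  (n / eD mu (n * rn n x)) * ∑' k : ℕ, (n * rn n x) ^ k / gammaD mu k *
    ∫ t in (((k : ℝ) + 2 * mu * theta k) / n)..(((k : ℝ) + 1 + 2 * mu * theta k) / n),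
      f ((n * t + a) / (n + b))

/-- Dunkl Szász–Kantorovich–Stancu operator T_n^*. -/
def TnStar (mu a b : ℝ) (n : ℕ) (f : ℝ → ℝ) (x : ℝ) : ℝ :=
  (n / eD mu (n * x)) * ∑' k : ℕ, (n * x) ^ k / gammaD mu k *
    ∫ t in (((k : ℝ) + 2 * mu * theta k) / n)..(((k : ℝ) + 1 + 2 * mu * theta k) / n),
      f ((n * t + a) / (n + b))

/-- Modulus of continuity of f on [0,∞). -/
def modCont (f : ℝ → ℝ) (d : ℝ) : ℝ :=
  sSup {y | ∃ t s : ℝ, 0 ≤ t ∧ 0 ≤ s ∧ |t - s| ≤ d ∧ y = |f t - f s|}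

open Filter Topology

lemma theta_nonneg (k : ℕ) : 0 ≤ theta k := by unfold theta; split <;> norm_num

lemma theta_le_one (k : ℕ) : theta k ≤ 1 := by unfold theta; split <;> norm_num

lemma theta_succ (k : ℕ) : theta (k + 1) = 1 - theta k := by
  unfold theta
  by_cases h : Even k <;> simp [h, Nat.even_add_one]

lemma gammaD_pos {mu : ℝ} (hmu : 0 ≤ mu) (n : ℕ) : 0 < gammaD mu n := by
  have h0 : 0 < Real.Gamma (mu + 1 / 2) := Real.Gamma_pos_of_pos (by linarith)
  have hn : (0:ℝ) ≤ ((n / 2 : ℕ) : ℝ) := Nat.cast_nonneg _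
  unfold gammaD
  split <;>
  · refine div_pos (mul_pos (mul_pos (by positivity) ?_) ?_) h0
    · exact_mod_cast Nat.factorial_pos _
    · exact Real.Gamma_pos_of_pos (by linarith)

lemma gammaD_succ (mu : ℝ) (hmu : 0 ≤ mu) (n : ℕ) :
    gammaD mu (n + 1) = ((n : ℝ) + 1 + 2 * mu * theta (n + 1)) * gammaD mu n := by
  have h0 : Real.Gamma (mu + 1 / 2) ≠ 0 := (Real.Gamma_pos_of_pos (by linarith)).ne'
  rcases Nat.even_or_odd n with ⟨m, hm⟩ | ⟨m, hm⟩
  · subst hm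
    have he : Even (m + m) := ⟨m, rfl⟩
    have ho : ¬ Even (m + m + 1) := by simp [Nat.even_add_one, he]
    have d1 : (m + m) / 2 = m := by omega
    have d2 : (m + m + 1) / 2 = m := by omega
    have hpos : (0:ℝ) < (m : ℝ) + mu + 1 / 2 := by positivity
    have key : Real.Gamma ((m : ℝ) + mu + 3 / 2)
        = ((m : ℝ) + mu + 1 / 2) * Real.Gamma ((m : ℝ) + mu + 1 / 2) := by
      rw [show (m : ℝ) + mu + 3 / 2 = ((m : ℝ) + mu + 1 / 2) + 1 by ring,
        Real.Gamma_add_one hpos.ne']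
    unfold gammaD theta
    simp only [he, ho, if_true, if_false, d1, d2]
    rw [key]
    push_cast
    field_simp
    ring
  · subst hm
    have ho : ¬ Even (2 * m + 1) := by simp [Nat.even_add_one]
    have he : Even (2 * m + 1 + 1) := by
      simp [Nat.even_add_one]
    have d1 : (2 * m + 1) / 2 = m := by omega
    have d2 : (2 * m + 1 + 1) / 2 = m + 1 := by omega
    have karg : ((m + 1 : ℕ) : ℝ) + mu + 1 / 2 = (m : ℝ) + mu + 3 / 2 := by push_cast; ring
    unfold gammaD theta
    simp only [he, ho, if_true, if_false, d1, d2]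
    rw [karg]
    rw [Nat.factorial_succ]
    push_cast
    field_simp
    ring

lemma factorial_le_gammaD (mu : ℝ) (hmu : 0 ≤ mu) (n : ℕ) :
    (n.factorial : ℝ) ≤ gammaD mu n := by
  induction n with
  | zero =>
    have h0 : Real.Gamma (mu + 1 / 2) ≠ 0 := (Real.Gamma_pos_of_pos (by linarith)).ne'
    unfold gammaD
    norm_num [div_self h0]
  | succ n ih =>
    rw [gammaD_succ mu hmu n]
    have ht : 0 ≤ 2 * mu * theta (n + 1) := by
      have := theta_nonneg (n + 1); positivity
    have h1 : ((n:ℝ) + 1) ≤ (n:ℝ) + 1 + 2 * mu * theta (n + 1) := by linarith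
    calc ((n + 1).factorial : ℝ) = ((n:ℝ) + 1) * n.factorial := by
          rw [Nat.factorial_succ]; push_cast; ring
      _ ≤ ((n:ℝ) + 1 + 2 * mu * theta (n + 1)) * gammaD mu n := by
          exact mul_le_mul h1 ih (Nat.cast_nonneg _) (by linarith)

lemma summable_master {c y : ℝ} (hc : 0 ≤ c) (hy : 0 < y) :
    Summable (fun k : ℕ => ((k : ℝ) + c + 1) ^ 2 * y ^ k / (Nat.factorial k)) := by
  set f : ℕ → ℝ := fun k => ((k : ℝ) + c + 1) ^ 2 * y ^ k / (Nat.factorial k) with hf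
  have hfpos : ∀ k, 0 < f k := by
    intro k
    have : (0:ℝ) < Nat.factorial k := by exact_mod_cast Nat.factorial_pos k
    have hk : (0:ℝ) < (k : ℝ) + c + 1 := by positivity
    positivity
  apply summable_of_ratio_test_tendsto_lt_one (l := 0) one_pos
  · filter_upwards with n; exact (hfpos n).ne'
  · have heq : ∀ n : ℕ, ‖f (n + 1)‖ / ‖f n‖
        = (1 + ((n : ℝ) + c + 1)⁻¹) ^ 2 * (y * ((n : ℝ) + 1)⁻¹) := by
      intro n
      rw [Real.norm_of_nonneg (hfpos (n + 1)).le, Real.norm_of_nonneg (hfpos n).le]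
      have h1 : ((n : ℝ) + c + 1) ≠ 0 := by positivity
      have h2 : ((n : ℝ) + 1) ≠ 0 := by positivity
      have h3 : (Nat.factorial n : ℝ) ≠ 0 := by exact_mod_cast (Nat.factorial_pos n).ne'
      have h4 : y ^ n ≠ 0 := (pow_pos hy n).ne'
      simp only [hf]
      rw [Nat.factorial_succ]
      push_cast
      field_simp
      ring
    simp only [heq]
    have hA : Tendsto (fun n : ℕ => ((n : ℝ) + c + 1)) atTop atTop := by
      have := tendsto_natCast_atTop_atTop (R := ℝ)
      exact tendsto_atTop_add_const_right atTop (c + 1) this |>.congr (by intro n; ring)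
    have hB : Tendsto (fun n : ℕ => ((n : ℝ) + 1)) atTop atTop := by
      have := tendsto_natCast_atTop_atTop (R := ℝ)
      exact tendsto_atTop_add_const_right atTop 1 this
    have hA' : Tendsto (fun n : ℕ => ((n : ℝ) + c + 1)⁻¹) atTop (𝓝 0) := hA.inv_tendsto_atTop
    have hB' : Tendsto (fun n : ℕ => ((n : ℝ) + 1)⁻¹) atTop (𝓝 0) := hB.inv_tendsto_atTop
    have := (((tendsto_const_nhds (x := (1:ℝ))).add hA').pow 2).mul
      ((tendsto_const_nhds (x := y)).mul hB')
    norm_num at this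
    exact this

lemma summable_dom {mu y : ℝ} (hmu : 0 ≤ mu) (hy : 0 < y) {f : ℕ → ℝ}
    (hb : ∀ k, |f k| ≤ ((k : ℝ) + 2 * mu + 1) ^ 2 * y ^ k / (Nat.factorial k)) :
    Summable f := by
  have h2 : (0:ℝ) ≤ 2 * mu := by linarith
  exact Summable.of_norm_bounded (summable_master h2 hy) hb

theorem sum_second_moment (mu : ℝ) (hmu : 0 ≤ mu) (y : ℝ) (hy : 0 ≤ y) :
    ∑' k : ℕ, ((k : ℝ) + 2 * mu * theta k) ^ 2 * y ^ k / gammaD mu k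
      = y ^ 2 * eD mu y + y * (eD mu y + 2 * mu * eD mu (-y)) := by
  rcases eq_or_lt_of_le hy with rfl | hy0
  · have hz : ∀ k : ℕ, ((k : ℝ) + 2 * mu * theta k) ^ 2 * (0:ℝ) ^ k / gammaD mu k = 0 := by
      intro k
      cases k with
      | zero => simp [theta]
      | succ n => simp [zero_pow (Nat.succ_ne_zero n)]
    rw [tsum_congr hz]
    simp
  · -- y > 0
    have hγpos : ∀ k, 0 < gammaD mu k := gammaD_pos hmu
    have hfac : ∀ k : ℕ, (0:ℝ) < Nat.factorial k := fun k => by exact_mod_cast Nat.factorial_pos k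
    have hθ0 : ∀ k, 0 ≤ 2 * mu * theta k := fun k => by
      have := theta_nonneg k; positivity
    have hθ1 : ∀ k : ℕ, (k:ℝ) + 2 * mu * theta k ≤ (k:ℝ) + 2 * mu + 1 := fun k => by
      have h := theta_le_one k
      nlinarith [theta_nonneg k]
    have hbase : ∀ k : ℕ, (1:ℝ) ≤ (k:ℝ) + 2 * mu + 1 := fun k => by
      have : (0:ℝ) ≤ (k:ℝ) := Nat.cast_nonneg k; linarith
    -- generic bound builder
    have hbound : ∀ (A : ℕ → ℝ), (∀ k, 0 ≤ A k) → (∀ k, A k ≤ ((k:ℝ) + 2 * mu + 1) ^ 2) →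
        ∀ k : ℕ, |A k * y ^ k / gammaD mu k| ≤ ((k:ℝ) + 2 * mu + 1) ^ 2 * y ^ k / Nat.factorial k := by
      intro A hA0 hA1 k
      rw [abs_of_nonneg (div_nonneg (mul_nonneg (hA0 k) (pow_nonneg hy k)) (hγpos k).le)]
      exact div_le_div₀ (by positivity) (mul_le_mul_of_nonneg_right (hA1 k) (by positivity))
        (hfac k) (factorial_le_gammaD mu hmu k)
    have hS2 : Summable (fun k : ℕ => ((k : ℝ) + 2 * mu * theta k) ^ 2 * y ^ k / gammaD mu k) := by
      apply summable_dom hmu hy0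
      apply hbound (fun k => ((k : ℝ) + 2 * mu * theta k) ^ 2) (fun k => by positivity)
      intro k
      have := hθ1 k
      have h0 := hθ0 k
      nlinarith [Nat.cast_nonneg (α := ℝ) k]
    have hS1 : Summable (fun k : ℕ => ((k : ℝ) + 2 * mu * theta k) * y ^ k / gammaD mu k) := by
      apply summable_dom hmu hy0
      apply hbound (fun k => ((k : ℝ) + 2 * mu * theta k))
        (fun k => by show (0:ℝ) ≤ (k : ℝ) + 2 * mu * theta k
                     have := hθ0 k; have : (0:ℝ) ≤ (k:ℝ) := Nat.cast_nonneg k; linarith)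
      intro k
      have h1 := hθ1 k
      have h2 := hbase k
      nlinarith
    have hSa : Summable (fun k : ℕ => y ^ k / gammaD mu k) := by
      have := summable_dom hmu hy0 (f := fun k : ℕ => 1 * y ^ k / gammaD mu k)
        (hbound (fun _ => 1) (fun _ => zero_le_one)
          (fun k => by show (1:ℝ) ≤ ((k:ℝ) + 2 * mu + 1) ^ 2
                       have := hbase k; nlinarith))
      simpa using this
    have hSneg : Summable (fun k : ℕ => (-y) ^ k / gammaD mu k) := by
      apply Summable.of_abs
      have heq : ∀ k : ℕ, |(-y) ^ k / gammaD mu k| = y ^ k / gammaD mu k := by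
        intro k
        rw [abs_div, abs_pow, abs_neg, abs_of_nonneg hy, abs_of_nonneg (hγpos k).le]
      rw [show (fun k : ℕ => |(-y) ^ k / gammaD mu k|) = fun k : ℕ => y ^ k / gammaD mu k from
        funext heq]
      exact hSa
    -- first moment identity
    have step1 : ∑' k : ℕ, ((k : ℝ) + 2 * mu * theta k) * y ^ k / gammaD mu k = y * eD mu y := by
      rw [Summable.tsum_eq_zero_add hS1]
      have h0 : ((0:ℕ) : ℝ) + 2 * mu * theta 0 = 0 := by simp [theta]
      rw [show (((0:ℕ) : ℝ) + 2 * mu * theta 0) * y ^ 0 / gammaD mu 0 = 0 by rw [h0]; ring_nf]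
      have hterm : ∀ k : ℕ, (((k+1:ℕ)) : ℝ) * y ^ (k+1) / gammaD mu (k+1)
          = (((k+1:ℕ)) : ℝ) * y ^ (k+1) / gammaD mu (k+1) := fun _ => rfl
      have key : ∀ k : ℕ, ((((k+1:ℕ)) : ℝ) + 2 * mu * theta (k+1)) * y ^ (k+1) / gammaD mu (k+1)
          = y * (y ^ k / gammaD mu k) := by
        intro k
        rw [gammaD_succ mu hmu k]
        have hc : (0:ℝ) < (k:ℝ) + 1 + 2 * mu * theta (k+1) := by
          have := hθ0 (k+1); have : (0:ℝ) ≤ (k:ℝ) := Nat.cast_nonneg k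
          have := hθ0 (k+1); linarith
        have hγ := (hγpos k).ne'
        push_cast
        field_simp
        ring
      rw [tsum_congr key, tsum_mul_left]
      rw [zero_add, eD]
    -- second moment
    have key2 : ∀ k : ℕ, ((((k+1:ℕ)) : ℝ) + 2 * mu * theta (k+1)) ^ 2 * y ^ (k+1) / gammaD mu (k+1)
        = y * (((k : ℝ) + 2 * mu * theta k) * y ^ k / gammaD mu k)
          + (y * (y ^ k / gammaD mu k) + (2 * mu * y) * ((-y) ^ k / gammaD mu k)) := by
      intro k
      rw [gammaD_succ mu hmu k, theta_succ]
      have hγ := (hγpos k).ne'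
      rcases Nat.even_or_odd k with hpar | hpar
      · have hth : theta k = 0 := by simp [theta, hpar]
        have hneg : (-y) ^ k = y ^ k := hpar.neg_pow y
        rw [hth, hneg]
        have hc : ((k:ℝ) + 1 + 2 * mu * (1 - 0)) ≠ 0 := by
          have : (0:ℝ) ≤ (k:ℝ) := Nat.cast_nonneg k; positivity
        push_cast
        field_simp
        ring
      · have hth : theta k = 1 := by simp [theta, Nat.not_even_iff_odd.mpr hpar]
        have hneg : (-y) ^ k = -(y ^ k) := hpar.neg_pow y
        rw [hth, hneg]
        have hc : ((k:ℝ) + 1 + 2 * mu * (1 - 1)) ≠ 0 := by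
          have : (0:ℝ) ≤ (k:ℝ) := Nat.cast_nonneg k
          simp only [sub_self, mul_zero, add_zero]
          positivity
        push_cast
        field_simp
        ring
    rw [Summable.tsum_eq_zero_add hS2]
    have h0 : (((0:ℕ) : ℝ) + 2 * mu * theta 0) ^ 2 * y ^ 0 / gammaD mu 0 = 0 := by
      simp [theta]
    rw [h0, zero_add, tsum_congr key2]
    rw [Summable.tsum_add (hS1.mul_left y) ((hSa.mul_left y).add (hSneg.mul_left (2 * mu * y)))]
    rw [Summable.tsum_add (hSa.mul_left y) (hSneg.mul_left (2 * mu * y))]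
    rw [tsum_mul_left, tsum_mul_left, tsum_mul_left, step1]
    show y * (y * eD mu y) + (y * eD mu y + 2 * mu * y * eD mu (-y)) = _
    ring
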